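/- Unique minimizer of the binary tempered cross-entropy: let 0 < t₁ < 2 and η ∈ (0,1). The function F(q) = -η · log_{t₁}(q) - (1-η) · log_{t₁}(1-q), defined for q ∈ (0,1), attains its minimum at the unique point q* = η^{1/t₁} / (η^{1/t₁} + (1-η)^{1/t₁}), i.e. F(q*) ≤ F(q) for all q ∈ (0,1) with equality only at q = q*. -/

import Mathlib

/-- The tempered logarithm `log_t`: for `t ≠ 1` it is `(x^(1-t) - 1)/(1-t)`;
for `t = 1` it is the natural logarithm. -/
noncomputable def tlog (t x : ℝ) : ℝ :=
  if t = 1 then Real.log x else (x ^ (1 - t) - 1) / (1 - t)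

lemma tlog_hasDerivAt (t x : ℝ) (hx : 0 < x) :
    HasDerivAt (tlog t) (x ^ (-t)) x := by
  rcases eq_or_ne t 1 with h | h
  · have : tlog t = Real.log := by
      funext y; simp [tlog, h]
    rw [this, h]
    simpa [Real.rpow_neg_one] using Real.hasDerivAt_log hx.ne'
  · have : tlog t = fun y : ℝ => (y ^ (1 - t) - 1) / (1 - t) := by
      funext y; simp [tlog, h]
    rw [this]
    have h1 : (1 : ℝ) - t ≠ 0 := sub_ne_zero.mpr (Ne.symm h)
    have hd : HasDerivAt (fun y : ℝ => y ^ (1 - t)) ((1 - t) * x ^ (1 - t - 1)) x :=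
      Real.hasDerivAt_rpow_const (Or.inl hx.ne')
    have h2 : HasDerivAt (fun y : ℝ => (y ^ (1 - t) - 1) / (1 - t))
        (((1 - t) * x ^ (1 - t - 1)) / (1 - t)) x := (hd.sub_const 1).div_const _
    have h3 : ((1 - t) * x ^ (1 - t - 1)) / (1 - t) = x ^ (-t) := by
      rw [show (1 : ℝ) - t - 1 = -t by ring, mul_div_cancel_left₀ _ h1]
    rwa [h3] at h2

lemma rpow_neg_anti {x y t : ℝ} (hx : 0 < x) (hxy : x < y) (ht : 0 < t) :
    y ^ (-t) < x ^ (-t) := by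
  rw [Real.rpow_neg hx.le, Real.rpow_neg (hx.trans hxy).le]
  have h1 : x ^ t < y ^ t := Real.rpow_lt_rpow hx.le hxy ht
  have h2 : 0 < x ^ t := Real.rpow_pos_of_pos hx t
  exact inv_strictAnti₀ h2 h1

theorem binary_cross_entropy_minimizer (t₁ : ℝ) (ht0 : 0 < t₁) (ht2 : t₁ < 2)
    (η : ℝ) (hη0 : 0 < η) (hη1 : η < 1) :
    (∀ q ∈ Set.Ioo (0 : ℝ) 1,
      -η * tlog t₁ (η ^ (1 / t₁) / (η ^ (1 / t₁) + (1 - η) ^ (1 / t₁))) -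
        (1 - η) * tlog t₁
          (1 - η ^ (1 / t₁) / (η ^ (1 / t₁) + (1 - η) ^ (1 / t₁))) ≤
      -η * tlog t₁ q - (1 - η) * tlog t₁ (1 - q)) ∧
    (∀ q ∈ Set.Ioo (0 : ℝ) 1,
      -η * tlog t₁ q - (1 - η) * tlog t₁ (1 - q) =
        -η * tlog t₁ (η ^ (1 / t₁) / (η ^ (1 / t₁) + (1 - η) ^ (1 / t₁))) -
          (1 - η) * tlog t₁
            (1 - η ^ (1 / t₁) / (η ^ (1 / t₁) + (1 - η) ^ (1 / t₁))) →
      q = η ^ (1 / t₁) / (η ^ (1 / t₁) + (1 - η) ^ (1 / t₁))) := by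
  have hη1' : 0 < 1 - η := by linarith
  set a : ℝ := η ^ (1 / t₁) with ha_def
  set b : ℝ := (1 - η) ^ (1 / t₁) with hb_def
  have ha : 0 < a := Real.rpow_pos_of_pos hη0 _
  have hb : 0 < b := Real.rpow_pos_of_pos hη1' _
  have hab : 0 < a + b := by linarith
  set p : ℝ := a / (a + b) with hp_def
  have hp0 : 0 < p := div_pos ha hab
  have hp1 : p < 1 := (div_lt_one hab).mpr (by linarith)
  have h1p : 1 - p = b / (a + b) := by
    field_simp [hp_def]
    rw [sub_mul, hp_def, div_mul_cancel₀ _ hab.ne']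
    ring
  -- a ^ t₁ = η, b ^ t₁ = 1 - η
  have hat : a ^ t₁ = η := by
    rw [ha_def, ← Real.rpow_mul hη0.le, one_div_mul_cancel ht0.ne', Real.rpow_one]
  have hbt : b ^ t₁ = 1 - η := by
    rw [hb_def, ← Real.rpow_mul hη1'.le, one_div_mul_cancel ht0.ne', Real.rpow_one]
  -- the loss function and its derivative
  set F : ℝ → ℝ := fun q => -η * tlog t₁ q - (1 - η) * tlog t₁ (1 - q) with hF_def
  set dF : ℝ → ℝ := fun q => -η * q ^ (-t₁) + (1 - η) * (1 - q) ^ (-t₁) with hdF_def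
  have hderiv : ∀ q ∈ Set.Ioo (0 : ℝ) 1, HasDerivAt F (dF q) q := by
    rintro q ⟨hq0, hq1⟩
    have h1 : HasDerivAt (fun q => tlog t₁ q) (q ^ (-t₁)) q := tlog_hasDerivAt t₁ q hq0
    have h2 : HasDerivAt (fun q : ℝ => tlog t₁ (1 - q)) ((1 - q) ^ (-t₁) * (-1)) q := by
      exact (tlog_hasDerivAt t₁ (1 - q) (by linarith)).comp q
        ((hasDerivAt_id q).const_sub 1)
    have := (h1.const_mul (-η)).sub (h2.const_mul (1 - η))
    refine this.congr_deriv ?_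
    simp only [hdF_def]
    ring
  -- dF is strictly monotone on Ioo 0 1
  have hmono : StrictMonoOn dF (Set.Ioo (0 : ℝ) 1) := by
    rintro x ⟨hx0, hx1⟩ y ⟨hy0, hy1⟩ hxy
    have h1 : y ^ (-t₁) < x ^ (-t₁) := rpow_neg_anti hx0 hxy ht0
    have h2 : (1 - y) ^ (-t₁) > (1 - x) ^ (-t₁) :=
      rpow_neg_anti (by linarith) (by linarith) ht0
    have := mul_lt_mul_of_pos_left h1 hη0
    have := mul_lt_mul_of_pos_left h2 hη1'
    simp only [hdF_def]
    nlinarith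
  -- dF p = 0
  have hdFp : dF p = 0 := by
    have h1 : p ^ (-t₁) = (a + b) ^ t₁ / η := by
      rw [hp_def, Real.rpow_neg (le_of_lt (div_pos ha hab)),
        Real.div_rpow ha.le hab.le, hat, inv_div]
    have h2 : (1 - p) ^ (-t₁) = (a + b) ^ t₁ / (1 - η) := by
      rw [h1p, Real.rpow_neg (le_of_lt (div_pos hb hab)),
        Real.div_rpow hb.le hab.le, hbt, inv_div]
    simp only [hdF_def, h1, h2]
    field_simp
    ring
  -- F strictly increasing on [p, 1)
  have hd_eq : ∀ q ∈ Set.Ioo (0 : ℝ) 1, deriv F q = dF q := fun q hq =>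
    (hderiv q hq).deriv
  have hcont : ContinuousOn F (Set.Ioo (0 : ℝ) 1) := fun q hq =>
    ((hderiv q hq).continuousAt).continuousWithinAt
  have hmonoF : StrictMonoOn F (Set.Ico p 1) := by
    apply strictMonoOn_of_deriv_pos (convex_Ico p 1)
    · exact hcont.mono (fun x hx => ⟨lt_of_lt_of_le hp0 hx.1, hx.2⟩)
    · intro x hx
      rw [interior_Ico] at hx
      have hx' : x ∈ Set.Ioo (0 : ℝ) 1 := ⟨hp0.trans hx.1, hx.2⟩
      rw [hd_eq x hx', ← hdFp]
      exact hmono ⟨hp0, hp1⟩ hx' hx.1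
  have hantiF : StrictAntiOn F (Set.Ioc 0 p) := by
    apply strictAntiOn_of_deriv_neg (convex_Ioc 0 p)
    · exact hcont.mono (fun x hx => ⟨hx.1, lt_of_le_of_lt hx.2 hp1⟩)
    · intro x hx
      rw [interior_Ioc] at hx
      have hx' : x ∈ Set.Ioo (0 : ℝ) 1 := ⟨hx.1, hx.2.trans hp1⟩
      rw [hd_eq x hx', ← hdFp]
      exact hmono hx' ⟨hp0, hp1⟩ hx.2
  have key : ∀ q ∈ Set.Ioo (0 : ℝ) 1, q ≠ p → F p < F q := by
    rintro q ⟨hq0, hq1⟩ hne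
    rcases lt_or_gt_of_ne hne with h | h
    · exact hantiF ⟨hq0, h.le⟩ ⟨hp0, le_refl p⟩ h
    · exact hmonoF ⟨le_refl p, hp1⟩ ⟨h.le, hq1⟩ h
  constructor
  · intro q hq
    rcases eq_or_ne q p with rfl | hne
    · exact le_refl _
    · exact (key q hq hne).le
  · intro q hq heq
    by_contra hne
    exact absurd heq (ne_of_gt (key q hq hne))
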